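/- For a 4×4 matrix X (not necessarily symmetric) with x_{22} ≠ 0, x_{33} ≠ 0, x_{23} ≠ 0, and p_{23} ≠ 0, the entry x_{41} equals the sum of six Laurent monomials: a_{21}a_{32}a_{43}/(p_2p_3) + a_{31|2}a_{43}/(p_2p_3) + a_{21}a_{42|3}/(p_2p_3) + a_{31|2}a_{42|3}/(p_2p_3a_{32}) + a_{31|2}a_{42|3}/(p_{23}a_{32}) + a_{41|23}/p_{23}. -/

import Mathlib

private lemma aux16 {K : Type*} [Field K] (A B C D E F G H I : K)
    (hB : B ≠ 0) (hF : F ≠ 0) (hE : E ≠ 0) (h : C * E - B * F ≠ 0) :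
    G = A * E * I / (B * F) + (D * B - E * A) * I / (B * F) +
      A * (H * F - I * E) / (B * F) + (D * B - E * A) * (H * F - I * E) / (B * F * E) +
      (D * B - E * A) * (H * F - I * E) / ((C * E - B * F) * E) +
      -(A * E * I - A * F * H - B * D * I + B * F * G + C * D * H - C * E * G) /
        (C * E - B * F) := by
  have hBF : B * F ≠ 0 := mul_ne_zero hB hF
  have hW : B * F * E * (C * E - B * F) ≠ 0 := mul_ne_zero (mul_ne_zero hBF hE) h
  have e1 : A * E * I / (B * F)
      = A * E * I * (E * (C * E - B * F)) / (B * F * E * (C * E - B * F)) := by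
    rw [div_eq_div_iff hBF hW]; ring
  have e2 : (D * B - E * A) * I / (B * F)
      = (D * B - E * A) * I * (E * (C * E - B * F)) / (B * F * E * (C * E - B * F)) := by
    rw [div_eq_div_iff hBF hW]; ring
  have e3 : A * (H * F - I * E) / (B * F)
      = A * (H * F - I * E) * (E * (C * E - B * F)) / (B * F * E * (C * E - B * F)) := by
    rw [div_eq_div_iff hBF hW]; ring
  have e4 : (D * B - E * A) * (H * F - I * E) / (B * F * E)
      = (D * B - E * A) * (H * F - I * E) * (C * E - B * F) / (B * F * E * (C * E - B * F)) := by
    rw [div_eq_div_iff (mul_ne_zero hBF hE) hW]; ring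
  have e5 : (D * B - E * A) * (H * F - I * E) / ((C * E - B * F) * E)
      = (D * B - E * A) * (H * F - I * E) * (B * F) / (B * F * E * (C * E - B * F)) := by
    rw [div_eq_div_iff (mul_ne_zero h hE) hW]; ring
  have e6 : -(A * E * I - A * F * H - B * D * I + B * F * G + C * D * H - C * E * G) /
        (C * E - B * F)
      = -(A * E * I - A * F * H - B * D * I + B * F * G + C * D * H - C * E * G) * (B * F * E) /
        (B * F * E * (C * E - B * F)) := by
    rw [div_eq_div_iff h hW]; ring
  rw [e1, e2, e3, e4, e5, e6, ← add_div, ← add_div, ← add_div,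
    ← add_div, ← add_div, eq_div_iff hW]
  ring

/-- Six-term Schröder path formula for the entry `x₄₁` of an
arbitrary (not necessarily symmetric) 4×4 matrix over a field (0-based
indices).  Signed minors: `p₂ = x₂₂`, `p₃ = x₃₃`, `p₂₃ = x₂₃x₃₂ − x₂₂x₃₃`,
`a₂₁ = x₂₁`, `a₃₂ = x₃₂`, `a₄₃ = x₄₃`, `a₃₁|₂ = x₃₁x₂₂ − x₃₂x₂₁`,
`a₄₂|₃ = x₄₂x₃₃ − x₄₃x₃₂`, `a₄₁|₂₃ = (−1)·det` of the submatrix with rows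
`{2,3,4}` and columns `{1,2,3}`. -/
theorem stmt16 {F : Type*} [Field F] (X : Matrix (Fin 4) (Fin 4) F)
    (h2 : X 1 1 ≠ 0) (h3 : X 2 2 ≠ 0) (h23' : X 1 2 ≠ 0) (h32 : X 2 1 ≠ 0)
    (h23 : X 1 2 * X 2 1 - X 1 1 * X 2 2 ≠ 0) :
    let p2 : F := X 1 1
    let p3 : F := X 2 2
    let p23 : F := X 1 2 * X 2 1 - X 1 1 * X 2 2
    let a21 : F := X 1 0
    let a32 : F := X 2 1
    let a43 : F := X 3 2
    let a312 : F := X 2 0 * X 1 1 - X 2 1 * X 1 0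
    let a423 : F := X 3 1 * X 2 2 - X 3 2 * X 2 1
    let a4123 : F :=
      -Matrix.det (Matrix.of fun a b : Fin 3 => X (Fin.succ a) (Fin.castSucc b))
    X 3 0 = a21 * a32 * a43 / (p2 * p3) + a312 * a43 / (p2 * p3) +
      a21 * a423 / (p2 * p3) + a312 * a423 / (p2 * p3 * a32) +
      a312 * a423 / (p23 * a32) + a4123 / p23 := by
  simp only [Matrix.det_fin_three, Matrix.of_apply,
    show (Fin.succ 0 : Fin 4) = 1 from rfl, show (Fin.succ 1 : Fin 4) = 2 from rfl,
    show (Fin.succ 2 : Fin 4) = 3 from rfl,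
    show (Fin.castSucc 0 : Fin 4) = 0 from rfl, show (Fin.castSucc 1 : Fin 4) = 1 from rfl,
    show (Fin.castSucc 2 : Fin 4) = 2 from rfl]
  exact aux16 (X 1 0) (X 1 1) (X 1 2) (X 2 0) (X 2 1) (X 2 2) (X 3 0) (X 3 1) (X 3 2) h2 h3 h32 h23
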